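/- arXiv:2012.13284 — 3 statements merged into one kernel-verified Lean document; each statement's English description precedes it below -/
import Mathlib

section
/- Let Ω ⊆ ℂ be a nonempty bounded open set. Then Ω is a regular open set if and only if there exists a sequence of points (x_n) in ℂ \ closure(Ω) whose set of accumulation points is exactly the boundary ∂Ω. -/
open Filter Topology Metric Set

theorem regular_iff_exists_accumulating_sequence
    (Ω : Set ℂ) (hne : Ω.Nonempty) (hb : Bornology.IsBounded Ω) (ho : IsOpen Ω) :
    Ω = interior (closure Ω) ↔
      ∃ x : ℕ → ℂ, (∀ n, x n ∈ (closure Ω)ᶜ) ∧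
        {p : ℂ | MapClusterPt p Filter.atTop x} = frontier Ω := by
  constructor
  · intro hreg
    -- frontier is nonempty
    have hfne : (frontier Ω).Nonempty := by
      by_contra h
      rw [Set.not_nonempty_iff_eq_empty] at h
      have hclopen : IsClopen Ω := isClopen_iff_frontier_eq_empty.mpr h
      rcases isClopen_iff.mp hclopen with h1 | h1
      · exact hne.ne_empty h1
      · exact NormedSpace.unbounded_univ ℝ ℂ (h1 ▸ hb)
    -- frontier ⊆ closure of complement of closure
    have hsub : frontier Ω ⊆ closure ((closure Ω)ᶜ) := by
      intro q hq
      rw [closure_compl]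
      intro hqi
      rw [← hreg] at hqi
      rw [ho.frontier_eq] at hq
      exact hq.2 hqi
    -- dense sequence in the frontier
    have : Nonempty (frontier Ω) := hfne.to_subtype
    obtain ⟨u, hu⟩ := TopologicalSpace.exists_dense_seq (frontier Ω)
    set p : ℕ → ℂ := fun k => (u k : ℂ) with hp_def
    have hp : ∀ k, p k ∈ frontier Ω := fun k => (u k).2
    have hdense : ∀ q ∈ frontier Ω, ∀ ε > 0, ∃ k, dist (p k) q < ε := by
      intro q hq ε hε
      have hqc : (⟨q, hq⟩ : frontier Ω) ∈ closure (Set.range u) := by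
        rw [hu.closure_range]; trivial
      rw [Metric.mem_closure_iff] at hqc
      obtain ⟨b, ⟨k, hk⟩, hb2⟩ := hqc ε hε
      refine ⟨k, ?_⟩
      rw [dist_comm]
      have : dist (⟨q, hq⟩ : frontier Ω) b = dist q (p k) := by
        rw [← hk, Subtype.dist_eq]
      linarith [this ▸ hb2]
    -- choose the sequence
    have hchoice : ∀ m : ℕ, ∃ y, y ∈ (closure Ω)ᶜ ∧
        dist y (p (Nat.unpair m).1) < 1 / ((m : ℝ) + 1) := by
      intro m
      have h1 := hsub (hp (Nat.unpair m).1)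
      rw [Metric.mem_closure_iff] at h1
      obtain ⟨b, hb1, hb2⟩ := h1 (1 / ((m : ℝ) + 1)) (by positivity)
      exact ⟨b, hb1, by rwa [dist_comm]⟩
    choose x hx1 hx2 using hchoice
    refine ⟨x, hx1, ?_⟩
    ext q
    simp only [Set.mem_setOf_eq]
    constructor
    · intro hq
      rw [← isClosed_frontier.closure_eq, Metric.mem_closure_iff]
      intro ε hε
      obtain ⟨N, hN⟩ := exists_nat_one_div_lt (half_pos hε)
      have hfreq := mapClusterPt_iff_frequently.mp hq (Metric.ball q (ε / 2))
          (Metric.ball_mem_nhds _ (half_pos hε))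
      obtain ⟨m, hmN, hm⟩ := frequently_atTop.mp hfreq N
      refine ⟨p (Nat.unpair m).1, hp _, ?_⟩
      have h1 : dist q (x m) < ε / 2 := by
        rw [dist_comm]; exact Metric.mem_ball.mp hm
      have h2 : dist (x m) (p (Nat.unpair m).1) < 1 / ((m : ℝ) + 1) := hx2 m
      have h3 : 1 / ((m : ℝ) + 1) ≤ 1 / ((N : ℝ) + 1) := by
        apply one_div_le_one_div_of_le
        · positivity
        · exact_mod_cast Nat.succ_le_succ hmN
      calc dist q (p (Nat.unpair m).1) ≤ dist q (x m) + dist (x m) (p (Nat.unpair m).1) :=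
            dist_triangle _ _ _
        _ < ε / 2 + 1 / ((N : ℝ) + 1) := by linarith
        _ < ε := by linarith
    · intro hq
      rw [mapClusterPt_iff_frequently]
      intro s hs
      obtain ⟨ε, hε, hball⟩ := Metric.mem_nhds_iff.mp hs
      rw [frequently_atTop]
      intro N
      obtain ⟨k, hk⟩ := hdense q hq (ε / 2) (half_pos hε)
      obtain ⟨n0, hn0⟩ := exists_nat_one_div_lt (half_pos hε)
      set m := Nat.pair k (max N n0) with hm_def
      have hmN : N ≤ m := le_trans (le_max_left _ _) (Nat.right_le_pair _ _)
      have hmn0 : n0 ≤ m := le_trans (le_max_right _ _) (Nat.right_le_pair _ _)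
      refine ⟨m, hmN, hball ?_⟩
      have hup : (Nat.unpair m).1 = k := by rw [hm_def, Nat.unpair_pair]
      have h2 : dist (x m) (p k) < 1 / ((m : ℝ) + 1) := by
        have := hx2 m; rwa [hup] at this
      have h3 : 1 / ((m : ℝ) + 1) ≤ 1 / ((n0 : ℝ) + 1) := by
        apply one_div_le_one_div_of_le
        · positivity
        · exact_mod_cast Nat.succ_le_succ hmn0
      rw [Metric.mem_ball]
      calc dist (x m) q ≤ dist (x m) (p k) + dist (p k) q := dist_triangle _ _ _
        _ < 1 / ((n0 : ℝ) + 1) + ε / 2 := by linarith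
        _ < ε := by linarith
  · rintro ⟨x, hx, hset⟩
    refine Set.Subset.antisymm (interior_maximal subset_closure ho) ?_
    intro q hqi
    by_contra hqΩ
    have hqf : q ∈ frontier Ω := by
      rw [ho.frontier_eq]
      exact ⟨interior_subset hqi, hqΩ⟩
    rw [← hset] at hqf
    have hfreq := mapClusterPt_iff_frequently.mp hqf (interior (closure Ω))
        (isOpen_interior.mem_nhds hqi)
    obtain ⟨m, _, hm⟩ := frequently_atTop.mp hfreq 0
    exact hx m (interior_subset hm)
end

section
/- Let K ⊆ ℂ be a compact set such that ℂ \ K is connected. Then there exists a sequence (U_n)_{n≥0} of compact subsets of ℂ such that for every n: (i) ℂ \ U_n is connected, (ii) K ⊆ interior(U_{n+1}) and U_{n+1} ⊆ interior(U_n), and (iii) the intersection of all U_n equals K. -/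
open Set Metric

/-- The complement of a closed ball in `ℂ` is preconnected. -/
lemma isPreconnected_compl_closedBall_complex {r : ℝ} (hr : 0 ≤ r) :
    IsPreconnected ((closedBall (0 : ℂ) r)ᶜ) := by
  have hrank : 1 < Module.rank ℝ ℂ := by
    rw [Complex.rank_real_complex]; exact Cardinal.one_lt_two
  have hx : ((r + 1 : ℝ) : ℂ) ∈ (closedBall (0 : ℂ) r)ᶜ := by
    simp only [mem_compl_iff, mem_closedBall, dist_zero_right, not_le, Complex.norm_real,
      Real.norm_eq_abs, abs_of_nonneg (by linarith : (0:ℝ) ≤ r + 1)]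
    linarith
  apply isPreconnected_of_forall (((r + 1 : ℝ) : ℂ))
  · intro y hy
    have hy' : r < ‖y‖ := by
      simpa only [mem_compl_iff, mem_closedBall, dist_zero_right, not_le] using hy
    have hy0 : y ≠ 0 := by
      intro h; rw [h, norm_zero] at hy'; exact absurd hy' (not_lt.2 hr)
    have hny : ‖y‖ ≠ 0 := norm_ne_zero_iff.2 hy0
    set c : ℂ := ‖y‖⁻¹ • y with hcdef
    have hcnorm : ‖c‖ = 1 := by
      rw [hcdef, norm_smul, norm_inv, norm_norm, inv_mul_cancel₀ hny]
    refine ⟨(fun s : ℝ => s • c) '' (Ioi r) ∪ sphere 0 (r + 1), ?_, ?_, ?_, ?_⟩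
    · rintro w (⟨s, hs, rfl⟩ | hw)
      · simp only [mem_compl_iff, mem_closedBall, dist_zero_right, not_le, norm_smul,
          Real.norm_eq_abs, hcnorm, mul_one]
        rw [abs_of_pos (lt_of_le_of_lt hr hs)]
        exact hs
      · simp only [mem_sphere_iff_norm, sub_zero] at hw
        simp only [mem_compl_iff, mem_closedBall, dist_zero_right, not_le, hw]
        linarith
    · right
      simp only [mem_sphere_iff_norm, sub_zero, Complex.norm_real, Real.norm_eq_abs,
        abs_of_nonneg (by linarith : (0:ℝ) ≤ r + 1)]
    · left
      refine ⟨‖y‖, hy', ?_⟩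
      show ‖y‖ • (‖y‖⁻¹ • y) = y
      rw [smul_smul, mul_inv_cancel₀ hny, one_smul]
    · apply IsPreconnected.union ((r + 1 : ℝ) • c)
      · exact ⟨r + 1, by simp only [mem_Ioi]; linarith, rfl⟩
      · simp only [mem_sphere_iff_norm, sub_zero, norm_smul, Real.norm_eq_abs, hcnorm, mul_one,
          abs_of_nonneg (by linarith : (0:ℝ) ≤ r + 1)]
      · exact isPreconnected_Ioi.image _ ((continuous_id.smul continuous_const).continuousOn)
      · exact isPreconnected_sphere hrank 0 (r + 1)

theorem exists_compact_neighborhood_exhaustion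
    (K : Set ℂ) (hK : IsCompact K) (hc : IsConnected Kᶜ) :
    ∃ U : ℕ → Set ℂ,
      (∀ n, IsCompact (U n)) ∧
      (∀ n, IsConnected (U n)ᶜ) ∧
      (∀ n, K ⊆ interior (U (n + 1))) ∧
      (∀ n, U (n + 1) ⊆ interior (U n)) ∧
      (⋂ n, U n) = K := by
  obtain ⟨R, hR0, hKR⟩ : ∃ R : ℝ, 0 ≤ R ∧ K ⊆ closedBall 0 R := by
    obtain ⟨R, hR⟩ := hK.isBounded.subset_closedBall 0
    exact ⟨max R 0, le_max_right _ _, hR.trans (closedBall_subset_closedBall (le_max_left _ _))⟩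
  set z₀ : ℂ := ((R + 2 : ℝ) : ℂ)
  have hz₀norm : ‖z₀‖ = R + 2 := by
    simp only [z₀, Complex.norm_real, Real.norm_eq_abs]
    exact abs_of_nonneg (by linarith)
  set ε : ℕ → ℝ := fun n => 1 / (n + 2) with hε
  have hεpos : ∀ n, 0 < ε n := fun n => by positivity
  have hεlt1 : ∀ n, ε n < 1 := fun n => by
    rw [hε]; rw [div_lt_one (by positivity)]
    have : (0:ℝ) ≤ n := Nat.cast_nonneg n
    linarith
  have hεanti : ∀ n, ε (n + 1) < ε n := fun n => by
    rw [hε]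
    apply div_lt_div_of_pos_left one_pos (by positivity)
    push_cast; linarith
  set A : ℕ → Set ℂ := fun n => cthickening (ε n) K with hA
  have hAco : ∀ n, IsCompact (A n) := fun n => hK.cthickening
  have hAcl : ∀ n, IsClosed (A n) := fun n => isClosed_cthickening
  have hAball : ∀ n, A n ⊆ closedBall 0 (R + 1) := by
    intro n
    calc A n ⊆ cthickening (ε n) (closedBall 0 R) := cthickening_subset_of_subset _ hKR
      _ ⊆ cthickening 1 (closedBall 0 R) :=
        cthickening_mono (le_of_lt (hεlt1 n)) _
      _ = closedBall 0 (1 + R) := cthickening_closedBall zero_le_one hR0 0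
      _ ⊆ closedBall 0 (R + 1) := closedBall_subset_closedBall (by linarith)
  have hz₀A : ∀ n, z₀ ∈ (A n)ᶜ := by
    intro n hz
    have := hAball n hz
    rw [mem_closedBall, dist_zero_right, hz₀norm] at this
    linarith
  set Ω : ℕ → Set ℂ := fun n => connectedComponentIn (A n)ᶜ z₀ with hΩ
  have hΩopen : ∀ n, IsOpen (Ω n) := fun n => (hAcl n).isOpen_compl.connectedComponentIn
  have hΩconn : ∀ n, IsConnected (Ω n) := fun n =>
    isConnected_connectedComponentIn_iff.2 (hz₀A n)
  have hΩsub : ∀ n, Ω n ⊆ (A n)ᶜ := fun n => connectedComponentIn_subset _ _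
  have hz₀Ω : ∀ n, z₀ ∈ Ω n := fun n => mem_connectedComponentIn (hz₀A n)
  -- the far region is inside Ω n
  have hfar : ∀ n, (closedBall (0:ℂ) (R + 1))ᶜ ⊆ Ω n := by
    intro n
    have hpc : IsPreconnected ((closedBall (0:ℂ) (R + 1))ᶜ) :=
      isPreconnected_compl_closedBall_complex (by linarith)
    have hz₀mem : z₀ ∈ (closedBall (0:ℂ) (R + 1))ᶜ := by
      simp only [mem_compl_iff, mem_closedBall, dist_zero_right, hz₀norm, not_le]
      linarith
    exact hpc.subset_connectedComponentIn hz₀mem (compl_subset_compl.2 (hAball n))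
  set U : ℕ → Set ℂ := fun n => (Ω n)ᶜ with hU
  have hUA : ∀ n, A n ⊆ U n := fun n => by
    rw [hU]; exact subset_compl_comm.1 (hΩsub n)
  have hKU : ∀ n, K ⊆ U n := fun n =>
    (self_subset_cthickening K).trans (hUA n)
  have hUball : ∀ n, U n ⊆ closedBall 0 (R + 1) := by
    intro n
    rw [← compl_compl (closedBall (0:ℂ) (R+1))]
    exact compl_subset_compl.2 (hfar n)
  have hUcomp : ∀ n, IsCompact (U n) := by
    intro n
    exact (isCompact_closedBall 0 (R+1)).of_isClosed_subset
      (hΩopen n).isClosed_compl (hUball n)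
  -- closure of Ω n is inside Ω (n+1)
  have hclos : ∀ n, closure (Ω n) ⊆ Ω (n + 1) := by
    intro n
    have h1 : A (n + 1) ⊆ interior (A n) := by
      have : A (n + 1) ⊆ thickening (ε n) K :=
        cthickening_subset_thickening' (hεpos n) (hεanti n) K
      exact this.trans ((isOpen_thickening).subset_interior_iff.2
        (thickening_subset_cthickening _ _))
    have h2 : closure ((A n)ᶜ) ⊆ (A (n + 1))ᶜ := by
      rw [closure_compl]
      exact compl_subset_compl.2 h1
    have h3 : closure (Ω n) ⊆ (A (n + 1))ᶜ :=
      (closure_mono (hΩsub n)).trans h2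
    exact ((hΩconn n).closure.isPreconnected).subset_connectedComponentIn
      (subset_closure (hz₀Ω n)) h3
  have hnest : ∀ n, U (n + 1) ⊆ interior (U n) := by
    intro n
    rw [hU, interior_compl]
    exact compl_subset_compl.2 (hclos n)
  refine ⟨U, hUcomp, ?_, ?_, hnest, ?_⟩
  · intro n
    rw [hU, compl_compl]
    exact hΩconn n
  · intro n
    have : K ⊆ thickening (ε (n+1)) K := self_subset_thickening (hεpos (n+1)) K
    refine this.trans ?_
    apply interior_maximal ?_ isOpen_thickening
    exact (thickening_subset_cthickening _ _).trans (hUA (n+1))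
  · apply Subset.antisymm
    · intro z hz
      by_contra hzK
      -- z ∈ Kᶜ; join z to z₀ in Kᶜ by a path
      have hKopen : IsOpen (Kᶜ) := hK.isClosed.isOpen_compl
      have hpc : IsPathConnected (Kᶜ) := (hKopen.isConnected_iff_isPathConnected).1 hc
      have hz₀K : z₀ ∈ Kᶜ := by
        intro h
        have := hKR h
        rw [mem_closedBall, dist_zero_right, hz₀norm] at this
        linarith
      obtain ⟨γ, hγ⟩ := (hpc.joinedIn z hzK z₀ hz₀K)
      set S : Set ℂ := Set.range γ with hS
      have hScomp : IsCompact S := isCompact_range γ.continuous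
      have hSconn : IsPreconnected S := (isPreconnected_range γ.continuous)
      have hSK : S ⊆ Kᶜ := by
        rintro - ⟨t, rfl⟩; exact hγ t
      have hKS : K ⊆ Sᶜ := subset_compl_comm.1 hSK
      obtain ⟨δ, hδpos, hδ⟩ := hK.exists_cthickening_subset_open
        (hScomp.isClosed.isOpen_compl) hKS
      obtain ⟨n, hn⟩ : ∃ n, ε n ≤ δ := by
        obtain ⟨n, hn⟩ := exists_nat_gt (1 / δ)
        refine ⟨n, ?_⟩
        rw [hε, div_le_iff₀ (by positivity)]
        rw [div_lt_iff₀ hδpos] at hn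
        nlinarith [hδpos, Nat.cast_nonneg (α := ℝ) n]
      have hSA : S ⊆ (A n)ᶜ := by
        intro s hs hsA
        exact (hδ (cthickening_mono hn K hsA)) hs
      have hSΩ : S ⊆ Ω n :=
        hSconn.subset_connectedComponentIn (by exact ⟨1, by simp⟩ : z₀ ∈ S) hSA
      have hzS : z ∈ S := ⟨0, by simp⟩
      have : z ∈ U n := mem_iInter.1 hz n
      exact this (hSΩ hzS)
    · exact subset_iInter hKU
end

section
/- Let U ⊆ ℂ be open, let (f_k) be a sequence of holomorphic functions on U converging locally uniformly to a holomorphic function f that is injective on U, and let K ⊆ U be compact. Then there exists N such that for all k ≥ N the restriction of f_k to K is injective. -/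
open Filter Topology Set Metric


lemma deriv_ne_zero_of_injOn {g : ℂ → ℂ} {a : ℂ} {V : Set ℂ}
    (hV : V ∈ 𝓝 a) (hga : AnalyticAt ℂ g a) (hinj : Set.InjOn g V) :
    deriv g a ≠ 0 := by
  intro hder
  have haV : a ∈ V := mem_of_mem_nhds hV
  set h : ℂ → ℂ := fun z => g z - g a with hh_def
  have hha : AnalyticAt ℂ h a := hga.sub analyticAt_const
  have hVe : ∀ᶠ z in 𝓝 a, z ∈ V := hV
  -- h is not eventually zero
  have hne : ¬ (∀ᶠ z in 𝓝 a, h z = 0) := by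
    intro hev
    have h1 : ∀ᶠ z in 𝓝[≠] a, (h z = 0 ∧ z ∈ V) ∧ z ∈ ({a}ᶜ : Set ℂ) :=
      ((hev.and hVe).filter_mono nhdsWithin_le_nhds).and self_mem_nhdsWithin
    obtain ⟨z, ⟨hz0, hzV⟩, hzne⟩ := h1.exists
    exact hzne (hinj hzV haV (by linear_combination hz0))
  -- finite order n
  have horder : analyticOrderAt h a ≠ ⊤ := fun ht => hne (analyticOrderAt_eq_top.1 ht)
  obtain ⟨n, hn⟩ := WithTop.ne_top_iff_exists.1 horder
  obtain ⟨u, hu, hua, huev⟩ := (hha.analyticOrderAt_eq_natCast (n := n)).1 hn.symm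
  -- n ≠ 0
  have hn0 : n ≠ 0 := by
    intro h0
    have := huev.self_of_nhds
    simp [h0, hh_def] at this
    exact hua (by rw [← this])
  -- deriv h a = 0
  have hdh : deriv h a = 0 := by
    rw [hh_def]
    simpa [deriv_sub_const] using hder
  -- n ≠ 1
  have hn1 : n ≠ 1 := by
    intro h1
    have hd : HasDerivAt (fun z => (z - a) ^ n • u z) (u a) a := by
      have h1' : HasDerivAt (fun z : ℂ => (z - a) ^ n) (1 : ℂ) a := by
        subst h1
        simpa using ((hasDerivAt_id a).sub_const a)
      have h2' : HasDerivAt u (deriv u a) a := hu.differentiableAt.hasDerivAt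
      have := h1'.smul h2'
      exact this.congr_deriv (by simp [sub_self, zero_pow hn0])
    have : deriv h a = u a := by
      rw [Filter.EventuallyEq.deriv_eq huev]
      exact hd.deriv
    exact hua (by rw [← this, hdh])
  have hn2 : 2 ≤ n := by omega
  have hnC : (n : ℂ) ≠ 0 := Nat.cast_ne_zero.2 hn0
  -- nth root of u a
  obtain ⟨r, hr⟩ := IsAlgClosed.exists_pow_nat_eq (u a) (by omega : 0 < n)
  have hrne : r ≠ 0 := by
    intro h0
    exact hua (by rw [← hr, h0, zero_pow hn0])
  set v : ℂ → ℂ := fun z => r * Complex.exp (Complex.log (u z / u a) / n) with hv_def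
  have hvne : ∀ z, v z ≠ 0 := fun z => mul_ne_zero hrne (Complex.exp_ne_zero _)
  have huev0 : ∀ᶠ z in 𝓝 a, u z ≠ 0 := hu.continuousAt.eventually_ne hua
  have hvn : ∀ᶠ z in 𝓝 a, v z ^ n = u z := by
    filter_upwards [huev0] with z hz
    have e1 : v z ^ n = r ^ n * Complex.exp ((n : ℂ) * (Complex.log (u z / u a) / n)) := by
      rw [hv_def, mul_pow, Complex.exp_nat_mul]
    rw [e1, mul_div_cancel₀ _ hnC, hr, Complex.exp_log (div_ne_zero hz hua),
      mul_div_cancel₀ _ hua]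
  set ψ : ℂ → ℂ := fun z => (z - a) * v z with hψ_def
  have hψa0 : ψ a = 0 := by simp [hψ_def]
  have hψa : AnalyticAt ℂ ψ a := by
    apply (analyticAt_id.sub analyticAt_const).mul
    apply analyticAt_const.mul
    apply AnalyticAt.cexp
    apply AnalyticAt.div _ analyticAt_const hnC
    exact AnalyticAt.clog (hu.div analyticAt_const hua) (by
      rw [div_self hua]; exact Complex.one_mem_slitPlane)
  have hψne : ∀ᶠ z in 𝓝[≠] a, ψ z ≠ 0 := by
    filter_upwards [self_mem_nhdsWithin] with z hz
    exact mul_ne_zero (sub_ne_zero.2 hz) (hvne z)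
  -- open mapping
  have hmap : 𝓝 (0 : ℂ) ≤ Filter.map ψ (𝓝 a) := by
    rcases hψa.eventually_constant_or_nhds_le_map_nhds with hc | hl
    · exfalso
      have hc' : ∀ᶠ z in 𝓝[≠] a, ψ z = ψ a := hc.filter_mono nhdsWithin_le_nhds
      obtain ⟨z, h1, h2⟩ := (hc'.and hψne).exists
      exact h2 (by rw [h1, hψa0])
    · rwa [hψa0] at hl
  -- eventually h z = ψ z ^ n
  have hhψ : ∀ᶠ z in 𝓝 a, h z = ψ z ^ n := by
    filter_upwards [huev, hvn] with z e1 e2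
    rw [e1, smul_eq_mul, ← e2]
    exact (mul_pow _ _ _).symm
  have hW : {z | z ∈ V ∧ h z = ψ z ^ n} ∈ 𝓝 a := hVe.and hhψ
  have himg : ψ '' {z | z ∈ V ∧ h z = ψ z ^ n} ∈ 𝓝 (0 : ℂ) :=
    hmap (Filter.image_mem_map hW)
  obtain ⟨ε, hε, hball⟩ := Metric.mem_nhds_iff.1 himg
  -- primitive n-th root of unity
  set ζ : ℂ := Complex.exp ((2 * Real.pi / n : ℝ) * Complex.I) with hζ_def
  have hζabs : ‖ζ‖ = 1 := Complex.norm_exp_ofReal_mul_I _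
  have hζn : ζ ^ n = 1 := by
    rw [hζ_def, ← Complex.exp_nat_mul, ← Complex.exp_two_pi_mul_I]
    congr 1
    push_cast
    field_simp
  have hζ1 : ζ ≠ 1 := by
    rw [hζ_def, Ne, Complex.exp_eq_one_iff]
    rintro ⟨m, hm⟩
    push_cast at hm
    field_simp [hnC] at hm
    have h2πI : (2 * (Real.pi : ℂ) * Complex.I) ≠ 0 := by
      simp [Real.pi_ne_zero, Complex.I_ne_zero]
    have hmn : ((m * n : ℤ) : ℂ) * (2 * (Real.pi : ℂ) * Complex.I) =
        1 * (2 * (Real.pi : ℂ) * Complex.I) := by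
      push_cast
      linear_combination (-(2 * (Real.pi : ℂ) * Complex.I)) * hm
    have : ((m * n : ℤ) : ℂ) = 1 := mul_right_cancel₀ h2πI hmn
    have : (m * n : ℤ) = 1 := by exact_mod_cast this
    have : (n : ℤ) ∣ 1 := Dvd.intro_left m this
    have := Int.le_of_dvd one_pos this
    omega
  -- choose z₂ close to a, not equal to a
  have hsmall : ∀ᶠ z in 𝓝 a, ‖ψ z‖ < ε := by
    have ht : Tendsto ψ (𝓝 a) (𝓝 (0 : ℂ)) := hψa0 ▸ hψa.continuousAt
    have h2 : ∀ᶠ z in 𝓝 a, ψ z ∈ Metric.ball (0 : ℂ) ε :=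
      ht.eventually_mem (Metric.ball_mem_nhds 0 hε)
    filter_upwards [h2] with z hz
    exact mem_ball_zero_iff.1 hz
  have hW' : ∀ᶠ z in 𝓝 a, z ∈ V ∧ h z = ψ z ^ n := hVe.and hhψ
  obtain ⟨z₂, ⟨⟨hz₂V, hz₂h⟩, hz₂s⟩, hz₂ψ⟩ :=
    (((hW'.and hsmall).filter_mono nhdsWithin_le_nhds).and hψne).exists
  -- ζ * ψ z₂ is in the image
  have hmem : ζ * ψ z₂ ∈ Metric.ball (0 : ℂ) ε := by
    rw [mem_ball_zero_iff]
    calc ‖ζ * ψ z₂‖ = ‖ζ‖ * ‖ψ z₂‖ := by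
          simp [map_mul]
      _ = ‖ψ z₂‖ := by rw [hζabs, one_mul]
      _ < ε := hz₂s
  obtain ⟨z₁, ⟨hz₁V, hz₁h⟩, hz₁ψ⟩ := hball hmem
  -- h z₁ = h z₂
  have hh12 : h z₁ = h z₂ := by
    rw [hz₁h, hz₂h, hz₁ψ, mul_pow, hζn, one_mul]
  have hg12 : g z₁ = g z₂ := by
    have := hh12
    simp only [hh_def] at this
    linear_combination this
  have h12 : z₁ = z₂ := hinj hz₁V hz₂V hg12
  have : ζ * ψ z₂ = ψ z₂ := by rw [← hz₁ψ, h12]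
  have : (ζ - 1) * ψ z₂ = 0 := by linear_combination this
  rcases mul_eq_zero.1 this with h | h
  · exact hζ1 (by linear_combination h)
  · exact hz₂ψ h

open Filter Topology Set Metric

-- quantitative injectivity
lemma injOn_of_deriv_close {F : ℂ → ℂ} {s : Set ℂ} (hs : Convex ℝ s)
    (hFd : ∀ x ∈ s, DifferentiableAt ℂ F x) {c : ℂ} (hc : c ≠ 0)
    (hb : ∀ x ∈ s, ‖deriv F x - c‖ ≤ ‖c‖ / 2) : Set.InjOn F s := by
  intro x hx y hy hxy
  set G : ℂ → ℂ := fun w => F w - c * w with hG_def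
  have hG : ∀ z ∈ s, HasDerivWithinAt G (deriv F z - c) s z := fun z hz =>
    (((hFd z hz).hasDerivAt.sub (((hasDerivAt_id z).const_mul c).congr_deriv
      (mul_one c)))).hasDerivWithinAt
  have hest := hs.norm_image_sub_le_of_norm_hasDerivWithin_le hG hb hx hy
  have hGG : G y - G x = -(c * (y - x)) := by simp only [hG_def]; rw [hxy]; ring
  rw [hGG, norm_neg, norm_mul] at hest
  have hcpos : 0 < ‖c‖ := norm_pos_iff.2 hc
  have : ‖y - x‖ = 0 := by nlinarith [norm_nonneg (y - x)]
  have := norm_eq_zero.1 this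
  linear_combination -this

theorem eventually_injOn_of_tendstoLocallyUniformly
    (U : Set ℂ) (hU : IsOpen U)
    (f : ℕ → ℂ → ℂ) (hf : ∀ k, DifferentiableOn ℂ (f k) U)
    (g : ℂ → ℂ) (hg : DifferentiableOn ℂ g U) (hginj : Set.InjOn g U)
    (hconv : TendstoLocallyUniformlyOn f g Filter.atTop U)
    (K : Set ℂ) (hKc : IsCompact K) (hKU : K ⊆ U) :
    ∃ N : ℕ, ∀ k ≥ N, Set.InjOn (f k) K := by
  rcases K.eq_empty_or_nonempty with rfl | hKne
  · exact ⟨0, fun k _ => Set.injOn_empty _⟩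
  have hganal : AnalyticOnNhd ℂ g U := hg.analyticOnNhd hU
  have hgderiv_ne : ∀ z ∈ U, deriv g z ≠ 0 := fun z hz => by
    exact deriv_ne_zero_of_injOn (hU.mem_nhds hz) (hganal z hz) hginj
  have hdga : AnalyticOnNhd ℂ (deriv g) U := hganal.deriv
  have hconv' := (tendstoLocallyUniformlyOn_iff_forall_isCompact hU).1 hconv
  have hdconv : TendstoLocallyUniformlyOn (deriv ∘ f) (deriv g) atTop U :=
    hconv.deriv (Filter.Eventually.of_forall hf) hU
  have hdconv' := (tendstoLocallyUniformlyOn_iff_forall_isCompact hU).1 hdconv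
  -- choose radii
  have key : ∀ a : ℂ, ∃ r : ℝ, 0 < r ∧ (a ∈ K → Metric.closedBall a (2 * r) ⊆ U ∧
      ∀ z ∈ Metric.closedBall a (2 * r), ‖deriv g z - deriv g a‖ ≤ ‖deriv g a‖ / 4) := by
    intro a
    by_cases ha : a ∈ K
    swap
    · exact ⟨1, one_pos, fun h => absurd h ha⟩
    have haU : a ∈ U := hKU ha
    obtain ⟨ρ, hρ, hball⟩ := Metric.isOpen_iff.1 hU a haU
    have hεpos : 0 < ‖deriv g a‖ / 4 := by
      have := norm_pos_iff.2 (hgderiv_ne a haU)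
      linarith
    have hc : ContinuousAt (deriv g) a := (hdga a haU).continuousAt
    obtain ⟨δ, hδ, hδ2⟩ := Metric.continuousAt_iff.1 hc (‖deriv g a‖ / 4) hεpos
    refine ⟨min δ ρ / 3, by positivity, fun _ => ⟨?_, ?_⟩⟩
    · intro z hz
      apply hball
      rw [Metric.mem_closedBall] at hz
      rw [Metric.mem_ball]
      have h1 : min δ ρ ≤ ρ := min_le_right _ _
      have h2 : 0 < min δ ρ := lt_min hδ hρ
      calc dist z a ≤ 2 * (min δ ρ / 3) := hz
        _ < min δ ρ := by linarith
        _ ≤ ρ := h1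
    · intro z hz
      rw [Metric.mem_closedBall] at hz
      have h1 : min δ ρ ≤ δ := min_le_left _ _
      have h2 : 0 < min δ ρ := lt_min hδ hρ
      have : dist z a < δ := by
        calc dist z a ≤ 2 * (min δ ρ / 3) := hz
          _ < min δ ρ := by linarith
          _ ≤ δ := h1
      have := hδ2 this
      rw [dist_eq_norm] at this
      linarith [le_of_lt this]
  choose r hrpos hrprop using key
  -- finite subcover
  obtain ⟨t, htK, htcov⟩ := hKc.elim_nhds_subcover (fun a => Metric.ball a (r a))
    (fun a _ => Metric.ball_mem_nhds a (hrpos a))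
  have htne : t.Nonempty := by
    obtain ⟨a0, ha0⟩ := hKne
    obtain ⟨x, hx, _⟩ := Set.mem_iUnion₂.1 (htcov ha0)
    exact ⟨x, hx⟩
  set δ : ℝ := t.inf' htne r with hδ_def
  have hδpos : 0 < δ := (Finset.lt_inf'_iff htne).2 fun a _ => hrpos a
  -- local injectivity, eventually
  have E1 : ∀ᶠ k in atTop, ∀ a ∈ t, Set.InjOn (f k) (Metric.closedBall a (2 * r a)) := by
    rw [Filter.eventually_all_finset]
    intro a hat
    have haK : a ∈ K := htK a hat
    obtain ⟨hballU, hbound⟩ := hrprop a haK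
    have haU : a ∈ U := hKU haK
    have hcne : deriv g a ≠ 0 := hgderiv_ne a haU
    have hεpos : 0 < ‖deriv g a‖ / 4 := by
      have := norm_pos_iff.2 hcne; linarith
    have htu : TendstoUniformlyOn (deriv ∘ f) (deriv g) atTop (Metric.closedBall a (2 * r a)) :=
      hdconv' _ hballU (isCompact_closedBall a _)
    filter_upwards [Metric.tendstoUniformlyOn_iff.1 htu (‖deriv g a‖ / 4) hεpos] with k hk
    apply injOn_of_deriv_close (convex_closedBall a (2 * r a))
      (fun x hx => ((hf k).differentiableAt (hU.mem_nhds (hballU hx)))) hcne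
    intro x hx
    have h1 := hk x hx
    rw [dist_eq_norm] at h1
    calc ‖deriv (f k) x - deriv g a‖
        ≤ ‖deriv (f k) x - deriv g x‖ + ‖deriv g x - deriv g a‖ := by
          simpa [dist_eq_norm] using dist_triangle (deriv (f k) x) (deriv g x) (deriv g a)
      _ ≤ ‖deriv g a‖ / 4 + ‖deriv g a‖ / 4 := by
          apply add_le_add _ (hbound x hx)
          rw [← norm_neg]
          simp only [neg_sub]
          exact le_of_lt h1
      _ = ‖deriv g a‖ / 2 := by ring
  -- separation
  set S : Set (ℂ × ℂ) := (K ×ˢ K) ∩ {p | δ ≤ dist p.1 p.2} with hS_def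
  have hScomp : IsCompact S := (hKc.prod hKc).inter_right (isClosed_le continuous_const continuous_dist)
  have hsep : ∃ m : ℝ, 0 < m ∧ ∀ p ∈ S, m ≤ ‖g p.1 - g p.2‖ := by
    rcases S.eq_empty_or_nonempty with hSe | hSne
    · exact ⟨1, one_pos, fun p hp => absurd (hSe ▸ hp) (Set.notMem_empty p)⟩
    have hcont : ContinuousOn (fun p : ℂ × ℂ => ‖g p.1 - g p.2‖) S := by
      apply ContinuousOn.norm
      apply ContinuousOn.sub
      · exact hg.continuousOn.comp continuous_fst.continuousOn
          (fun p hp => hKU (hp.1.1))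
      · exact hg.continuousOn.comp continuous_snd.continuousOn
          (fun p hp => hKU (hp.1.2))
    obtain ⟨p0, hp0S, hmin⟩ := hScomp.exists_isMinOn hSne hcont
    refine ⟨‖g p0.1 - g p0.2‖, ?_, fun p hp => hmin hp⟩
    rw [norm_pos_iff, sub_ne_zero]
    intro heq
    have hne : p0.1 ≠ p0.2 := by
      intro h12
      have := hp0S.2
      rw [Set.mem_setOf_eq, h12, dist_self] at this
      linarith
    exact hne (hginj (hKU hp0S.1.1) (hKU hp0S.1.2) heq)
  obtain ⟨m, hm, hmsep⟩ := hsep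
  -- uniform closeness on K
  have E3 : ∀ᶠ k in atTop, ∀ x ∈ K, dist (g x) (f k x) < m / 2 :=
    Metric.tendstoUniformlyOn_iff.1 (hconv' K hKU hKc) (m / 2) (by linarith)
  obtain ⟨N, hN⟩ := Filter.eventually_atTop.1 (E1.and E3)
  refine ⟨N, fun k hk x hx y hy hxy => ?_⟩
  obtain ⟨hk1, hk2⟩ := hN k hk
  by_cases hcase : dist x y < δ
  · -- same ball
    obtain ⟨a, hat, hxa⟩ := Set.mem_iUnion₂.1 (htcov hx)
    have hδa : δ ≤ r a := Finset.inf'_le r hat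
    rw [Metric.mem_ball] at hxa
    have hxcb : x ∈ Metric.closedBall a (2 * r a) := by
      rw [Metric.mem_closedBall]
      have := hrpos a
      linarith [le_of_lt hxa]
    have hycb : y ∈ Metric.closedBall a (2 * r a) := by
      rw [Metric.mem_closedBall]
      calc dist y a ≤ dist y x + dist x a := dist_triangle y x a
        _ ≤ δ + r a := by
            rw [dist_comm y x]; exact add_le_add (le_of_lt hcase) (le_of_lt hxa)
        _ ≤ 2 * r a := by linarith
    exact hk1 a hat hxcb hycb hxy
  · -- far apart: contradiction
    exfalso
    push_neg at hcase
    have hpS : (x, y) ∈ S := ⟨⟨hx, hy⟩, hcase⟩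
    have h1 := hmsep _ hpS
    have h2 : ‖g x - g y‖ < m := by
      have e1 := hk2 x hx
      have e2 := hk2 y hy
      rw [dist_eq_norm] at e1 e2
      calc ‖g x - g y‖ = ‖(g x - f k x) + (f k y - g y) + (f k x - f k y)‖ := by
            rw [show g x - g y = (g x - f k x) + (f k y - g y) + (f k x - f k y) by ring]
        _ ≤ ‖(g x - f k x) + (f k y - g y)‖ + ‖f k x - f k y‖ := norm_add_le _ _
        _ ≤ ‖g x - f k x‖ + ‖f k y - g y‖ + ‖f k x - f k y‖ := by
            linarith [norm_add_le (g x - f k x) (f k y - g y)]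
        _ < m / 2 + m / 2 + 0 := by
            rw [hxy] at e1
            rw [hxy, sub_self, norm_zero]
            rw [norm_sub_rev] at e2
            linarith
        _ = m := by ring
    linarith
end
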